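/- arXiv:1812.04779 — 8 statements merged into one kernel-verified Lean document; each statement's English description precedes it below -/
import Mathlib

section
/- Let R be a ring with central element z, and let T, X₁, X₂ ∈ R satisfy X₁X₂ = X₂X₁, T² = zT + 1, T·X₁·T = X₂, and suppose X₁ and X₂ are units. Then for every integer a ≥ 1, T·X₁⁻ᵃ = X₂⁻ᵃ·T + z·∑_{b=0}^{a−1} X₂⁻ᵇ·X₁^{b−a}. -/
/-- Let `R` be a ring with central element `z`, and let `T, X₁, X₂ ∈ R` satisfy
`X₁X₂ = X₂X₁`, `T² = zT + 1`, `T·X₁·T = X₂`, and suppose `X₁` and `X₂` are units. Then for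
every integer `a ≥ 1`, `T·X₁⁻ᵃ = X₂⁻ᵃ·T + z·∑_{b=0}^{a−1} X₂⁻ᵇ·X₁^{b−a}`.
(The invertible elements `X₁, X₂` are modeled as units of `R`, with integer powers given by
`zpow` on units.) -/
theorem stmt_2 (R : Type*) [Ring R] (z T : R) (X₁ X₂ : Rˣ) (hz : ∀ r : R, Commute z r)
    (hcomm : (X₁ : R) * (X₂ : R) = (X₂ : R) * (X₁ : R))
    (hT : T * T = z * T + 1) (hTXT : T * (X₁ : R) * T = (X₂ : R))
    (a : ℕ) (ha : 1 ≤ a) :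
    T * ((X₁ ^ (-(a : ℤ)) : Rˣ) : R)
      = ((X₂ ^ (-(a : ℤ)) : Rˣ) : R) * T
        + z * ∑ b ∈ Finset.range a,
            ((X₂ ^ (-(b : ℤ)) : Rˣ) : R) * ((X₁ ^ ((b : ℤ) - (a : ℤ)) : Rˣ) : R) := by
  -- key relation: X₂ T = T X₁ + z X₂
  have h1 : (X₂ : R) * T = T * (X₁ : R) + z * (X₂ : R) := by
    calc (X₂ : R) * T = T * (X₁ : R) * T * T := by rw [hTXT]
      _ = T * (X₁ : R) * (z * T + 1) := by rw [mul_assoc (T * (X₁:R)), hT]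
      _ = T * (X₁ : R) * z * T + T * (X₁ : R) := by rw [mul_add, mul_one, ← mul_assoc]
      _ = z * (T * (X₁ : R) * T) + T * (X₁ : R) := by
          rw [← (hz (T * (X₁:R))).eq, mul_assoc]
      _ = T * (X₁ : R) + z * (X₂ : R) := by rw [hTXT, add_comm]
  -- base case identity: T X₁⁻¹ = X₂⁻¹ T + z X₁⁻¹
  have hbase : T * ((X₁⁻¹ : Rˣ) : R) = ((X₂⁻¹ : Rˣ) : R) * T + z * ((X₁⁻¹ : Rˣ) : R) := by
    have hX1 : ((X₁ : R)) * ((X₁⁻¹ : Rˣ) : R) = 1 := X₁.mul_inv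
    have hX2 : (((X₂⁻¹ : Rˣ) : R)) * (X₂ : R) = 1 := X₂.inv_mul
    calc T * ((X₁⁻¹ : Rˣ) : R)
        = ((X₂⁻¹ : Rˣ) : R) * ((X₂ : R) * T) * ((X₁⁻¹ : Rˣ) : R) := by
          rw [← mul_assoc, hX2, one_mul]
      _ = ((X₂⁻¹ : Rˣ) : R) * (T * (X₁ : R) + z * (X₂ : R)) * ((X₁⁻¹ : Rˣ) : R) := by rw [h1]
      _ = ((X₂⁻¹ : Rˣ) : R) * (T * ((X₁ : R) * ((X₁⁻¹ : Rˣ) : R)))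
            + ((X₂⁻¹ : Rˣ) : R) * z * ((X₂ : R) * ((X₁⁻¹ : Rˣ) : R)) := by
          rw [mul_add, add_mul]
          simp only [mul_assoc]
      _ = ((X₂⁻¹ : Rˣ) : R) * T + z * ((X₁⁻¹ : Rˣ) : R) := by
          rw [hX1, mul_one, ← (hz _).eq, mul_assoc, ← mul_assoc ((X₂⁻¹:Rˣ):R), hX2, one_mul]
  -- induction
  induction a, ha using Nat.le_induction with
  | base =>
      simp only [Nat.cast_one, Finset.range_one, Finset.sum_singleton, Nat.cast_zero, neg_zero,
        zpow_zero, Units.val_one, one_mul, zpow_neg_one]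
      convert hbase using 3
      norm_num
  | succ a ha IH =>
      have e1 : (X₁ ^ (-((a:ℕ)+1 : ℤ)) : Rˣ) = X₁ ^ (-(a : ℤ)) * X₁⁻¹ := by
        rw [← zpow_neg_one, ← zpow_add]; ring_nf
      have e2 : (X₂ ^ (-((a:ℕ)+1 : ℤ)) : Rˣ) = X₂ ^ (-(a : ℤ)) * X₂⁻¹ := by
        rw [← zpow_neg_one, ← zpow_add]; ring_nf
      have cast1 : ((a+1 : ℕ) : ℤ) = (a : ℤ) + 1 := by push_cast; ring
      rw [cast1, e1, Units.val_mul, ← mul_assoc, IH, add_mul, e2, Units.val_mul]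
      rw [mul_assoc ((X₂ ^ (-(a:ℤ)) : Rˣ) : R) T, hbase]
      rw [Finset.sum_range_succ]
      have term : ∀ b : ℕ, b ∈ Finset.range a →
          ((X₂ ^ (-(b : ℤ)) : Rˣ) : R) * ((X₁ ^ ((b : ℤ) - (a : ℤ)) : Rˣ) : R) * ((X₁⁻¹ : Rˣ) : R)
          = ((X₂ ^ (-(b : ℤ)) : Rˣ) : R) * ((X₁ ^ ((b : ℤ) - ((a : ℤ)+1)) : Rˣ) : R) := by
        intro b _
        rw [mul_assoc, ← Units.val_mul, ← zpow_neg_one, ← zpow_add]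
        ring_nf
      rw [mul_assoc z, Finset.sum_mul, Finset.sum_congr rfl term]
      have e3 : ((a : ℤ) - ((a:ℤ)+1)) = -1 := by ring
      rw [e3, zpow_neg_one]
      -- now rearrange ring-side
      have hzpull : ((X₂ ^ (-(a:ℤ)) : Rˣ) : R) * (z * ((X₁⁻¹ : Rˣ) : R))
          = z * (((X₂ ^ (-(a:ℤ)) : Rˣ) : R) * ((X₁⁻¹ : Rˣ) : R)) := by
        rw [← mul_assoc, ← (hz _).eq, mul_assoc]
      rw [mul_add ((X₂ ^ (-(a:ℤ)) : Rˣ) : R), hzpull, mul_add z (∑ x ∈ Finset.range a,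
        ((X₂ ^ (-(x:ℤ)) : Rˣ) : R) * ((X₁ ^ ((x:ℤ) - ((a:ℤ)+1)) : Rˣ) : R))]
      noncomm_ring
end

section
/- Let K be an algebraically closed field, q ∈ K with q ≠ 0 and q² ≠ 1, and set z = q − q⁻¹. Let V be a nonzero finite-dimensional K-vector space and X₁, X₂, T ∈ End(V) with X₁∘X₂ = X₂∘X₁, T∘X₁∘T = X₂, and T∘T = z·T + id. Then every eigenvalue of X₂ on V is of the form λ, q²λ, or q⁻²λ for some eigenvalue λ of X₁ on V. -/
/-- Let `K` be an algebraically closed field, `q ∈ K` with `q ≠ 0` and `q² ≠ 1`,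
and set `z = q − q⁻¹`. Let `V` be a nonzero finite-dimensional `K`-vector space and
`X₁, X₂, T ∈ End(V)` with `X₁∘X₂ = X₂∘X₁`, `T∘X₁∘T = X₂`, and `T∘T = z·T + id`. Then every
eigenvalue of `X₂` on `V` is of the form `λ`, `q²λ`, or `q⁻²λ` for some eigenvalue `λ` of
`X₁` on `V`. -/
theorem stmt_5 (K : Type*) [Field K] [IsAlgClosed K] (q : K) (hq : q ≠ 0)
    (hq2 : q ^ 2 ≠ 1)
    (V : Type*) [AddCommGroup V] [Module K V] [FiniteDimensional K V] [Nontrivial V]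
    (X₁ X₂ T : Module.End K V)
    (hcomm : X₁ * X₂ = X₂ * X₁) (h1 : T * X₁ * T = X₂)
    (h2 : T * T = (q - q⁻¹) • T + 1)
    (μ : K) (hμ : Module.End.HasEigenvalue X₂ μ) :
    ∃ lam : K, Module.End.HasEigenvalue X₁ lam ∧
      (μ = lam ∨ μ = q ^ 2 * lam ∨ μ = q⁻¹ ^ 2 * lam) := by
  classical
  set z : K := q - q⁻¹ with hzdef
  -- the eigenspace of X₂ is X₁-invariant
  have hEinv : ∀ x ∈ Module.End.eigenspace X₂ μ, X₁ x ∈ Module.End.eigenspace X₂ μ := by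
    intro x hx
    rw [Module.End.mem_eigenspace_iff] at hx ⊢
    have h := congrArg (fun f : Module.End K V => f x) hcomm.symm
    simp only [Module.End.mul_apply] at h
    rw [h, hx, map_smul]
  haveI hEne : Nontrivial (Module.End.eigenspace X₂ μ) :=
    Submodule.nontrivial_iff_ne_bot.mpr hμ
  obtain ⟨lam, hlam⟩ := Module.End.exists_eigenvalue (X₁.restrict hEinv)
  obtain ⟨⟨v, hvE⟩, hev⟩ := hlam.exists_hasEigenvector
  have hvne : v ≠ 0 := by
    intro h
    exact hev.right (by simp [Subtype.ext_iff, h])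
  have hX1v : X₁ v = lam • v := by
    have h := congrArg Subtype.val hev.apply_eq_smul
    simpa [LinearMap.restrict_apply] using h
  have hX2v : X₂ v = μ • v := Module.End.mem_eigenspace_iff.mp hvE
  have hlam1 : Module.End.HasEigenvalue X₁ lam :=
    Module.End.hasEigenvalue_of_hasEigenvector
      ⟨Module.End.mem_eigenspace_iff.mpr hX1v, hvne⟩
  -- cancellation
  have cancel : ∀ a b : K, a • v = b • v → a = b := by
    intro a b h
    have : (a - b) • v = 0 := by rw [sub_smul, h, sub_self]
    rcases smul_eq_zero.mp this with h' | h'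
    · exact sub_eq_zero.mp h'
    · exact absurd h' hvne
  -- pointwise relations
  have hTT : ∀ x : V, T (T x) = z • T x + x := by
    intro x
    have h := congrArg (fun f : Module.End K V => f x) h2
    simpa using h
  have hTXT : ∀ x : V, T (X₁ (T x)) = X₂ x := by
    intro x
    have h := congrArg (fun f : Module.End K V => f x) h1
    simpa using h
  -- key relation: μ • T v = (z*μ) • v + X₁ (T v)
  have key : μ • T v = (z * μ) • v + X₁ (T v) := by
    have h := hTT (X₁ (T v))
    rw [hTXT v, hX2v, map_smul, smul_smul] at h
    exact h
  by_cases hμlam : μ = lam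
  · exact ⟨lam, hlam1, Or.inl hμlam⟩
  · have hsub : μ - lam ≠ 0 := sub_ne_zero.mpr hμlam
    set c : K := z * μ / (μ - lam) with hcdef
    have hc : c * (μ - lam) = z * μ := by
      rw [hcdef]; exact div_mul_cancel₀ _ hsub
    set w : V := T v - c • v with hwdef
    by_cases hw : w = 0
    · -- T v = c • v
      have hTv : T v = c • v := by
        have := sub_eq_zero.mp hw
        exact this
      -- c² = z c + 1
      have hc2 : c * c = z * c + 1 := by
        have h := hTT v
        rw [hTv, map_smul, hTv, smul_smul, smul_smul] at h
        exact cancel _ _ (by rw [h, add_smul, one_smul])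
      -- μ = c² * lam
      have hmu : μ = c * c * lam := by
        have h := hTXT v
        rw [hTv, map_smul, hX1v, smul_smul, map_smul, hTv, smul_smul, hX2v] at h
        have h' := cancel _ _ h
        rw [← h']; ring
      -- factor c² - z c - 1 = (c - q)(c + q⁻¹)
      have hfact : (c - q) * (c + q⁻¹) = 0 := by
        have : (c - q) * (c + q⁻¹) = c * c - z * c - 1 := by
          rw [hzdef]; field_simp; ring
        rw [this, hc2]; ring
      rcases mul_eq_zero.mp hfact with h' | h'
      · have hcq : c = q := sub_eq_zero.mp h'
        exact ⟨lam, hlam1, Or.inr (Or.inl (by rw [hmu, hcq]; ring))⟩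
      · have hcq : c = -q⁻¹ := eq_neg_of_add_eq_zero_left h'
        refine ⟨lam, hlam1, Or.inr (Or.inr ?_)⟩
        rw [hmu, hcq]; ring
    · -- w is an eigenvector of X₁ with eigenvalue μ
      have hX1w : X₁ w = μ • w := by
        rw [hwdef, map_sub, map_smul, hX1v]
        have : X₁ (T v) = μ • T v - (z * μ) • v := by
          rw [key]; abel
        rw [this, smul_smul, smul_sub, smul_smul]
        rw [sub_sub, ← add_smul]
        congr 2
        have heq : z * μ + c * lam = μ * c := by linear_combination -hc
        rw [heq]
      have : Module.End.HasEigenvalue X₁ μ :=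
        Module.End.hasEigenvalue_of_hasEigenvector
          ⟨Module.End.mem_eigenspace_iff.mpr hX1w, hw⟩
      exact ⟨μ, this, Or.inl rfl⟩
end

section
/- Let R be a commutative ring and n ≥ 0. In the ring of symmetric polynomials in variables x₁,…,x_N over R, the complete homogeneous symmetric polynomial h_n equals the determinant of the n×n matrix whose (i,j) entry is e_{i−j+1}, where e_k denotes the k-th elementary symmetric polynomial with the conventions e₀ = 1 and e_k = 0 for k < 0 or k > N. -/
open PowerSeries Finset

lemma geo {A : Type*} [CommRing A] (a : A) :
    (1 - PowerSeries.C a * PowerSeries.X) * PowerSeries.mk (fun k => a ^ k) = 1 := by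
  have : PowerSeries.mk (fun k => a ^ k) * (1 - PowerSeries.C a * PowerSeries.X) = 1 := by
    ext n
    cases n with
    | zero => simp
    | succ m =>
      simp only [mul_sub, mul_one, map_sub, ← mul_assoc, mul_comm (PowerSeries.mk fun k => a^k) (PowerSeries.C a)]
      rw [PowerSeries.coeff_succ_mul_X, PowerSeries.coeff_mk, PowerSeries.coeff_C_mul, PowerSeries.coeff_mk]
      simp [pow_succ, mul_comm]
  rw [mul_comm]; exact this

open PowerSeries Finset MvPolynomial

lemma sum_count_univ {N : ℕ} (m : Multiset (Fin N)) :
    ∑ i : Fin N, m.count i = Multiset.card m := by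
  rw [← Multiset.toFinset_sum_count_eq]
  exact (Finset.sum_subset (Finset.subset_univ _)
    (fun x _ hx => Multiset.count_eq_zero_of_notMem (by simpa using hx))).symm

lemma hsymm_mk (N : ℕ) (R : Type*) [CommRing R] :
    (PowerSeries.mk fun n => MvPolynomial.hsymm (Fin N) R n) =
      ∏ i : Fin N, PowerSeries.mk fun k => (MvPolynomial.X i : MvPolynomial (Fin N) R) ^ k := by
  refine PowerSeries.ext fun n => ?_
  rw [PowerSeries.coeff_mk, PowerSeries.coeff_prod, MvPolynomial.hsymm]
  refine Finset.sum_bij (fun (s : Sym (Fin N) n) _ => Multiset.toFinsupp (s : Multiset (Fin N)))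
    ?_ ?_ ?_ ?_
  · intro s _
    rw [Finset.mem_finsuppAntidiag]
    refine ⟨?_, Finset.subset_univ _⟩
    exact (Finset.sum_congr rfl fun i _ => by simp [Multiset.toFinsupp_apply]).trans
      ((sum_count_univ (s : Multiset (Fin N))).trans s.2)
  · intro s _ t _ h
    apply Sym.coe_injective
    exact Multiset.toFinsupp.injective h
  · intro l hl
    rw [Finset.mem_finsuppAntidiag] at hl
    refine ⟨⟨Finsupp.toMultiset l, ?_⟩, Finset.mem_univ _, by show Multiset.toFinsupp (Finsupp.toMultiset l) = l; ext i; simp⟩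
    rw [← hl.1, ← sum_count_univ (Finsupp.toMultiset l)]
    exact Finset.sum_congr rfl fun i _ => by simp
  · intro s _
    simp only [PowerSeries.coeff_mk, Multiset.toFinsupp_apply]
    rw [Finset.prod_multiset_map_count]
    refine Finset.prod_subset (Finset.subset_univ _) fun x _ hx => ?_
    rw [Multiset.count_eq_zero_of_notMem (by simpa using hx), pow_zero]

open PowerSeries Finset

lemma coeff_prod_one_sub {ι : Type*} [DecidableEq ι] {A : Type*} [CommRing A]
    (s : Finset ι) (r : ι → A) (k : ℕ) :
    PowerSeries.coeff k (∏ i ∈ s, (1 - PowerSeries.C (r i) * PowerSeries.X)) =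
      (-1) ^ k * ∑ t ∈ Finset.powersetCard k s, ∏ i ∈ t, r i := by
  induction s using Finset.induction_on generalizing k with
  | empty =>
    cases k with
    | zero => simp
    | succ m =>
      rw [Finset.powersetCard_eq_empty.2 (by simp)]
      simp [PowerSeries.coeff_one]
  | insert _ _ ha ih =>
    rename_i a s
    rw [Finset.prod_insert ha, sub_mul, one_mul, map_sub]
    rw [mul_assoc, mul_comm (PowerSeries.X) _, ← mul_assoc, mul_assoc]
    rw [PowerSeries.coeff_C_mul]
    cases k with
    | zero =>
      simp [ih 0]
    | succ m =>
      rw [PowerSeries.coeff_succ_mul_X, ih (m+1), ih m,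
        Finset.powersetCard_succ_insert ha]
      rw [Finset.sum_union, Finset.sum_image]
      · have : ∀ t ∈ Finset.powersetCard m s, ∏ i ∈ insert a t, r i = r a * ∏ i ∈ t, r i := by
          intro t ht
          rw [Finset.mem_powersetCard] at ht
          exact Finset.prod_insert fun hat => ha (ht.1 hat)
        rw [Finset.sum_congr rfl this, ← Finset.mul_sum]
        ring
      · intro t ht u hu htu
        rw [Finset.mem_coe, Finset.mem_powersetCard] at ht hu
        have h1 : a ∉ t := fun h => ha (ht.1 h)
        have h2 : a ∉ u := fun h => ha (hu.1 h)
        have := congrArg (fun (w : Finset ι) => w.erase a) htu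
        simpa [Finset.erase_insert h1, Finset.erase_insert h2] using this
      · rw [Finset.disjoint_right]
        intro t ht ht'
        simp only [Finset.mem_image] at ht
        obtain ⟨u, hu, rfl⟩ := ht
        rw [Finset.mem_powersetCard] at ht'
        exact ha (ht'.1 (Finset.mem_insert_self a u))

open MvPolynomial in
lemma eh_identity (N : ℕ) (R : Type*) [CommRing R] {n : ℕ} (hn : n ≠ 0) :
    ∑ k ∈ Finset.range (n+1),
      (-1) ^ k * MvPolynomial.esymm (Fin N) R k * MvPolynomial.hsymm (Fin N) R (n - k) = 0 := by
  have key : (∏ i : Fin N, (1 - PowerSeries.C (MvPolynomial.X i)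
      * PowerSeries.X)) * (PowerSeries.mk fun m => MvPolynomial.hsymm (Fin N) R m) = 1 := by
    rw [hsymm_mk, ← Finset.prod_mul_distrib]
    exact Finset.prod_eq_one fun i _ => geo _
  have h2 := congrArg (PowerSeries.coeff n) key
  rw [PowerSeries.coeff_mul, PowerSeries.coeff_one, if_neg hn] at h2
  rw [Finset.Nat.sum_antidiagonal_eq_sum_range_succ_mk] at h2
  rw [← h2]
  refine Finset.sum_congr rfl fun k _ => ?_
  rw [coeff_prod_one_sub, PowerSeries.coeff_mk, MvPolynomial.esymm, mul_assoc]

open MvPolynomial Finset in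
/-- Let `R` be a commutative ring and `n ≥ 0`. In the ring of symmetric
polynomials in variables `x₁,…,x_N` over `R`, the complete homogeneous symmetric polynomial
`h_n` equals the determinant of the `n×n` matrix whose `(i,j)` entry is `e_{i−j+1}` (indices
`i, j` running over `1,…,n`), where `e_k` denotes the `k`-th elementary symmetric polynomial
with the conventions `e₀ = 1` and `e_k = 0` for `k < 0` or `k > N`.
(Here `i, j : Fin n` are 0-based, so the entry index `i − j + 1` becomes `(i+1) − (j+1) + 1`;
it is negative exactly when `(j : ℕ) > (i : ℕ) + 1`, in which case the entry is `0`.) -/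
theorem stmt_8 (R : Type*) [CommRing R] (N : ℕ) (n : ℕ) :
    MvPolynomial.hsymm (Fin N) R n =
      Matrix.det (Matrix.of fun i j : Fin n =>
        if (j : ℕ) ≤ (i : ℕ) + 1 then
          MvPolynomial.esymm (Fin N) R ((i : ℕ) + 1 - (j : ℕ))
        else 0) := by
  set A := MvPolynomial (Fin N) R with hA
  set e : ℕ → A := fun k => MvPolynomial.esymm (Fin N) R k with he
  set h : ℕ → A := fun k => MvPolynomial.hsymm (Fin N) R k with hh
  set L : Matrix (Fin (n+1)) (Fin (n+1)) A :=
    Matrix.of (fun i j => if (j:ℕ) ≤ (i:ℕ) then (-1)^((i:ℕ)-(j:ℕ)) * e ((i:ℕ)-(j:ℕ)) else 0)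
    with hL
  set U : Matrix (Fin (n+1)) (Fin (n+1)) A :=
    Matrix.of (fun i j => if (j:ℕ) ≤ (i:ℕ) then h ((i:ℕ)-(j:ℕ)) else 0) with hU
  have hLU : L * U = 1 := by
    refine Matrix.ext fun i j => ?_
    rw [Matrix.mul_apply, Matrix.one_apply]
    have step1 : ∑ k : Fin (n+1), L i k * U k j
        = ∑ k ∈ Finset.range (n+1), (if k ≤ (i:ℕ) ∧ (j:ℕ) ≤ k then
            (-1)^((i:ℕ)-k) * e ((i:ℕ)-k) * h (k-(j:ℕ)) else 0) := by
      rw [← Fin.sum_univ_eq_sum_range]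
      refine Finset.sum_congr rfl fun k _ => ?_
      simp only [hL, hU, Matrix.of_apply]
      by_cases h1 : (k:ℕ) ≤ (i:ℕ) <;> by_cases h2 : (j:ℕ) ≤ (k:ℕ) <;>
        simp [h1, h2, mul_assoc]
    by_cases hij : (j:ℕ) ≤ (i:ℕ)
    · obtain ⟨m, hm⟩ : ∃ m, (i:ℕ) - (j:ℕ) = m := ⟨_, rfl⟩
      have hin : (i:ℕ) ≤ n := Nat.lt_succ_iff.mp i.isLt
      have hrange : Finset.Icc (j:ℕ) (i:ℕ) ⊆ Finset.range (n+1) := fun k hk => by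
        rw [Finset.mem_Icc] at hk; rw [Finset.mem_range]; omega
      have step2 : ∑ k ∈ Finset.range (n+1), (if k ≤ (i:ℕ) ∧ (j:ℕ) ≤ k then
            (-1)^((i:ℕ)-k) * e ((i:ℕ)-k) * h (k-(j:ℕ)) else 0)
          = ∑ k ∈ Finset.Icc (j:ℕ) (i:ℕ), (if k ≤ (i:ℕ) ∧ (j:ℕ) ≤ k then
            (-1)^((i:ℕ)-k) * e ((i:ℕ)-k) * h (k-(j:ℕ)) else 0) := by
        refine (Finset.sum_subset hrange fun k _ hk => ?_).symm
        rw [Finset.mem_Icc] at hk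
        rw [if_neg]; omega
      have step3 : ∑ k ∈ Finset.Icc (j:ℕ) (i:ℕ), (if k ≤ (i:ℕ) ∧ (j:ℕ) ≤ k then
            (-1)^((i:ℕ)-k) * e ((i:ℕ)-k) * h (k-(j:ℕ)) else 0)
          = ∑ d ∈ Finset.range (m+1), (-1)^(m-d) * e (m-d) * h d := by
        rw [← Finset.Ico_add_one_right_eq_Icc, Finset.sum_Ico_eq_sum_range]
        have hc : (i:ℕ) + 1 - (j:ℕ) = m + 1 := by omega
        rw [hc]
        refine Finset.sum_congr rfl fun d hd => ?_
        rw [Finset.mem_range] at hd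
        rw [if_pos (by omega)]
        have h1 : (i:ℕ) - ((j:ℕ) + d) = m - d := by omega
        have h2 : (j:ℕ) + d - (j:ℕ) = d := by omega
        rw [h1, h2]
      have step4 : ∑ d ∈ Finset.range (m+1), (-1)^(m-d) * e (m-d) * h d
          = ∑ k ∈ Finset.range (m+1), (-1)^k * e k * h (m-k) := by
        rw [← Finset.sum_range_reflect (fun k => (-1)^k * e k * h (m-k)) (m+1)]
        refine Finset.sum_congr rfl fun d hd => ?_
        rw [Finset.mem_range] at hd
        have h1 : m + 1 - 1 - d = m - d := by omega
        have h2 : m - (m - d) = d := by omega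
        rw [h1, h2]
      rw [step1, step2, step3, step4]
      by_cases hm0 : m = 0
      · have : i = j := Fin.ext (by omega)
        rw [if_pos this, hm0]
        simp [he, hh, MvPolynomial.esymm_zero, MvPolynomial.hsymm_zero]
      · have hne : i ≠ j := by
          intro hc
          apply hm0
          rw [hc] at hm
          omega
        rw [if_neg hne]
        exact eh_identity N R hm0
    · rw [step1, if_neg (fun hc => hij (by rw [hc]))]
      refine Finset.sum_eq_zero fun k _ => ?_
      rw [if_neg]; omega
  have hdetL : L.det = 1 := by
    have htri : L.BlockTriangular OrderDual.toDual := by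
      intro i j hij
      simp only [OrderDual.toDual_lt_toDual] at hij
      rw [hL]
      exact if_neg (by exact_mod_cast Nat.not_le.mpr hij)
    rw [Matrix.det_of_lowerTriangular L htri]
    refine Finset.prod_eq_one fun i _ => ?_
    simp [hL, he, MvPolynomial.esymm_zero]
  have hUadj : U = L.adjugate := by
    calc U = (L.adjugate * L) * U := by
            rw [Matrix.adjugate_mul, hdetL, one_smul, Matrix.one_mul]
    _ = L.adjugate * (L * U) := by rw [Matrix.mul_assoc]
    _ = L.adjugate := by rw [hLU, Matrix.mul_one]
  have hstart : MvPolynomial.hsymm (Fin N) R n = U (Fin.last n) 0 := by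
    simp [hU, hh, Fin.val_last]
  rw [hstart, hUadj, Matrix.adjugate_fin_succ_eq_det_submatrix]
  have hsign : ((-1:A)) ^ (((0 : Fin (n+1)):ℕ) + ((Fin.last n):ℕ)) = (-1)^n := by simp
  set T : Matrix (Fin n) (Fin n) A :=
    Matrix.of (fun i j : Fin n =>
      if (j : ℕ) ≤ (i : ℕ) + 1 then e ((i : ℕ) + 1 - (j : ℕ)) else 0) with hT
  have hsub : L.submatrix (Fin.succAbove 0) (Fin.succAbove (Fin.last n)) =
      Matrix.of (fun r c : Fin n => (-1)^((r:ℕ)+1) *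
        (Matrix.of (fun r' c' : Fin n => (-1)^((c':ℕ)) * T r' c')) r c) := by
    refine Matrix.ext fun r c => ?_
    simp only [Matrix.submatrix_apply, Fin.zero_succAbove, Fin.succAbove_last_apply,
      hL, hT, Matrix.of_apply, Fin.val_succ, Fin.coe_castSucc]
    by_cases hc : (c:ℕ) ≤ (r:ℕ) + 1
    · rw [if_pos hc, if_pos hc]
      have h1 : (-1:A)^((r:ℕ)+1-(c:ℕ)) * (-1)^((c:ℕ)) = (-1)^((r:ℕ)+1) := by
        rw [← pow_add]
        congr 1
        omega
      have h2 : ((-1:A)^((c:ℕ)))^2 = 1 := by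
        rw [← pow_mul, mul_comm, pow_mul]
        simp
      calc (-1:A)^((r:ℕ)+1-(c:ℕ)) * e ((r:ℕ)+1-(c:ℕ))
          = ((-1:A)^((r:ℕ)+1-(c:ℕ)) * (-1)^((c:ℕ)) * (-1)^((c:ℕ))) * e ((r:ℕ)+1-(c:ℕ)) := by
            rw [mul_assoc ((-1:A)^((r:ℕ)+1-(c:ℕ))), ← sq, h2, mul_one]
      _ = (-1)^((r:ℕ)+1) * ((-1)^((c:ℕ)) * e ((r:ℕ)+1-(c:ℕ))) := by rw [h1]; ring
    · rw [if_neg hc, if_neg hc, mul_zero, mul_zero]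
  have hprod : (∏ r : Fin n, (-1:A)^((r:ℕ)+1)) * (∏ c : Fin n, (-1:A)^((c:ℕ))) = (-1)^n := by
    rw [← Finset.prod_mul_distrib]
    have hterm : ∀ r : Fin n, (-1:A)^((r:ℕ)+1) * (-1)^((r:ℕ)) = -1 := fun r => by
      rw [← pow_add]
      have h3 : (r:ℕ)+1+(r:ℕ) = 2*(r:ℕ)+1 := by ring
      rw [h3, pow_succ, pow_mul]
      simp
    rw [Finset.prod_congr rfl fun r _ => hterm r, Finset.prod_const]
    simp
  rw [hsub, Matrix.det_mul_column, Matrix.det_mul_row]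
  have hsign' : ((0 : Fin (n+1)):ℕ) + ((Fin.last n):ℕ) = n := by simp
  rw [hsign']
  have h2 : ((-1:A)^n) * ((-1:A)^n) = 1 := by
    rw [← pow_add, ← two_mul, pow_mul]
    simp
  calc (-1:A)^n * ((∏ r : Fin n, (-1:A)^((r:ℕ)+1)) * ((∏ c : Fin n, (-1:A)^((c:ℕ))) * T.det))
      = ((-1:A)^n * ((∏ r : Fin n, (-1:A)^((r:ℕ)+1)) * (∏ c : Fin n, (-1:A)^((c:ℕ))))) * T.det := by
        ring
  _ = ((-1:A)^n * (-1:A)^n) * T.det := by rw [hprod]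
  _ = T.det := by rw [h2, one_mul]
end

section
/- Let R be a commutative ring, a ∈ R a unit, and for m ≥ 0 and n ≥ 0 define the modified complete symmetric polynomial h̃_m(x₁,…,x_n) = ∑_{1≤i₁≤…≤i_m≤n} a^{|{i₁,…,i_m}|−1} x_{i₁}⋯x_{i_m} (so h̃₀ = a⁻¹, and h̃_m(x₁,…,x₀) = 0 for m > 0). Then for all n ≥ 1 and m ≥ 0: h̃_m(x₁,…,x_n) = h̃_m(x₁,…,x_{n−1}) + a·∑_{r=1}^{m} h̃_{m−r}(x₁,…,x_{n−1})·x_nʳ. -/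
/-- The modified complete symmetric polynomial
`h̃_m(x₁,…,x_n) = ∑_{1≤i₁≤…≤i_m≤n} a^{|{i₁,…,i_m}|−1} x_{i₁}⋯x_{i_m}` of the paper,
where `a` is a unit of the commutative ring `R`, `|{i₁,…,i_m}|` is the number of distinct
values among `i₁,…,i_m`, and the variables are `x 0, …, x (n-1)` (so `h̃₀ = a⁻¹`, and
`h̃_m = 0` for `m > 0` but `n = 0`). Weakly increasing sequences `i₁ ≤ … ≤ i_m` of elements
of `{0,…,n-1}` are identified with multisets of size `m` on `{0,…,n-1}`. -/
noncomputable def htilde {R : Type*} [CommRing R] (a : Rˣ) (x : ℕ → R) (m n : ℕ) : R :=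
  ∑ μ ∈ (Finset.range n).sym m,
    ((a ^ ((μ.1.toFinset.card : ℤ) - 1) : Rˣ) : R) * (μ.1.map x).prod

open Finset in
lemma fiber_sum {R : Type*} [CommRing R] (a : Rˣ) (x : ℕ → R) (m n r : ℕ)
    (hn : 1 ≤ n) (hr : 1 ≤ r) (hrm : r ≤ m) :
    ∑ μ ∈ ((Finset.range n).sym m).filter (fun μ => Multiset.count (n - 1) μ.1 = r),
      ((a ^ ((μ.1.toFinset.card : ℤ) - 1) : Rˣ) : R) * (μ.1.map x).prod
    = (a : R) * (htilde a x (m - r) (n - 1) * x (n - 1) ^ r) := by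
  have key : ∀ μ : Sym ℕ m, Multiset.count (n - 1) μ.1 = r →
      Multiset.replicate r (n - 1) ≤ μ.1 := by
    intro μ h2
    rw [Multiset.le_iff_count]
    intro b
    rcases eq_or_ne b (n - 1) with rfl | hb
    · simpa [Multiset.count_replicate] using h2.ge
    · simp [Multiset.count_replicate, Ne.symm hb]
  rw [htilde, Finset.sum_mul, Finset.mul_sum]
  refine Finset.sum_bij' (fun μ hμ => (Sym.mk (μ.1 - Multiset.replicate r (n - 1)) ?_ : Sym ℕ (m - r)))
    (fun ν hν => (Sym.mk (ν.1 + Multiset.replicate r (n - 1)) ?_ : Sym ℕ m)) ?_ ?_ ?_ ?_ ?_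
  · -- card of difference
    simp only [Finset.mem_filter] at hμ
    rw [Multiset.card_sub (key μ hμ.2), Multiset.card_replicate, μ.2]
  · rw [Multiset.card_add, Multiset.card_replicate, ν.2]; omega
  · -- i maps into target
    intro μ hμ
    simp only [Finset.mem_filter, Finset.mem_sym_iff, Finset.mem_range] at hμ
    simp only [Finset.mem_sym_iff, Sym.mem_mk, Finset.mem_range]
    intro b hb
    have hbμ : b ∈ μ.1 := Multiset.mem_of_le tsub_le_self hb
    have h1 : b < n := hμ.1 b hbμ
    have h2 : b ≠ n - 1 := by
      rintro rfl
      have h0 : Multiset.count (n - 1) (μ.1 - Multiset.replicate r (n - 1)) = 0 := by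
        rw [Multiset.count_sub, hμ.2, Multiset.count_replicate, if_pos rfl]; omega
      exact (Multiset.count_eq_zero.mp h0) hb
    omega
  · -- j maps into source
    intro ν hν
    simp only [Finset.mem_sym_iff, Finset.mem_range] at hν
    simp only [Finset.mem_filter, Finset.mem_sym_iff, Sym.mem_mk, Finset.mem_range]
    constructor
    · intro b hb
      rcases Multiset.mem_add.mp hb with hb | hb
      · have := hν b hb; omega
      · rw [Multiset.eq_of_mem_replicate hb]; omega
    · have hcnt : Multiset.count (n - 1) ν.1 = 0 :=
        Multiset.count_eq_zero.mpr (fun h => lt_irrefl _ (hν _ h))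
      rw [Multiset.count_add, hcnt, Multiset.count_replicate, if_pos rfl, zero_add]
  · -- left inverse
    intro μ hμ
    simp only [Finset.mem_filter] at hμ
    exact Sym.coe_injective (tsub_add_cancel_of_le (key μ hμ.2))
  · -- right inverse
    intro ν hν
    exact Sym.coe_injective (add_tsub_cancel_right _ _)
  · -- value equality
    intro μ hμ
    simp only [Finset.mem_filter] at hμ
    have hle := key μ hμ.2
    have hμeq : μ.1 = (μ.1 - Multiset.replicate r (n - 1)) + Multiset.replicate r (n - 1) :=
      (tsub_add_cancel_of_le hle).symm
    have hnot : (n - 1) ∉ (μ.1 - Multiset.replicate r (n - 1)).toFinset := by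
      rw [Multiset.mem_toFinset]
      refine Multiset.count_eq_zero.mp ?_
      rw [Multiset.count_sub, hμ.2, Multiset.count_replicate, if_pos rfl]; omega
    conv_lhs => rw [hμeq]
    rw [Multiset.toFinset_add, Multiset.toFinset_replicate, if_neg (by omega : r ≠ 0),
      Finset.union_comm, ← Finset.insert_eq, Finset.card_insert_of_notMem hnot,
      Multiset.map_add, Multiset.prod_add, Multiset.map_replicate, Multiset.prod_replicate]
    set c := (μ.1 - Multiset.replicate r (n - 1)).toFinset.card with hc
    rw [show ((c + 1 : ℕ) : ℤ) - 1 = 1 + ((c : ℤ) - 1) from by push_cast; ring,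
      zpow_add, zpow_one, Units.val_mul]
    ring

open Finset in
/-- Let `R` be a commutative ring, `a ∈ R` a unit, and `h̃_m` the modified
complete symmetric polynomial as above. Then for all `n ≥ 1` and `m ≥ 0`:
`h̃_m(x₁,…,x_n) = h̃_m(x₁,…,x_{n−1}) + a·∑_{r=1}^{m} h̃_{m−r}(x₁,…,x_{n−1})·x_nʳ`. -/
theorem stmt_9 (R : Type*) [CommRing R] (a : Rˣ) (x : ℕ → R) (m n : ℕ) (hn : 1 ≤ n) :
    htilde a x m n =
      htilde a x m (n - 1)
        + (a : R) * ∑ r ∈ Finset.Icc 1 m, htilde a x (m - r) (n - 1) * x (n - 1) ^ r := by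
  have h0 : ((Finset.range n).sym m).filter (fun μ => Multiset.count (n - 1) μ.1 = 0)
      = (Finset.range (n - 1)).sym m := by
    ext μ
    simp only [Finset.mem_filter, Finset.mem_sym_iff, Finset.mem_range,
      Multiset.count_eq_zero, ← Sym.mem_coe]
    constructor
    · rintro ⟨h1, h2⟩ b hb
      have hbn := h1 b hb
      have : b ≠ n - 1 := fun h => h2 (h ▸ hb)
      omega
    · intro h1
      exact ⟨fun b hb => by have := h1 b hb; omega,
        fun hmem => by have := h1 _ hmem; omega⟩
  have hfib := Finset.sum_fiberwise_of_maps_to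
    (s := (Finset.range n).sym m)
    (g := fun μ : Sym ℕ m => Multiset.count (n - 1) μ.1)
    (t := Finset.range (m + 1))
    (fun μ hμ => by
      simp only [Finset.mem_range]
      have : Multiset.count (n - 1) μ.1 ≤ Multiset.card μ.1 := Multiset.count_le_card _ _
      rw [μ.2] at this; omega)
    (fun μ : Sym ℕ m => ((a ^ ((μ.1.toFinset.card : ℤ) - 1) : Rˣ) : R) * (μ.1.map x).prod)
  rw [htilde, ← hfib]
  rw [show Finset.range (m + 1) = insert 0 (Finset.Icc 1 m) from by ext b; simp; omega,
    Finset.sum_insert (by simp)]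
  congr 1
  · rw [h0, htilde]
  · rw [Finset.mul_sum]
    refine Finset.sum_congr rfl fun r hr => ?_
    simp only [Finset.mem_Icc] at hr
    rw [fiber_sum a x m n r hn hr.1 hr.2]
end

section
/- Let R be a commutative ring, a ∈ R a unit, and define h̃_m(x₁,…,x_n) = ∑_{1≤i₁≤…≤i_m≤n} a^{|{i₁,…,i_m}|−1} x_{i₁}⋯x_{i_m} as above. Then for all n ≥ 1 and m ≥ 1: h̃_m(x₁,…,x_n) = h̃_m(x₁,…,x_{n−1}) + h̃_{m−1}(x₁,…,x_n)·x_n − (1−a)·h̃_{m−1}(x₁,…,x_{n−1})·x_n. -/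
section aux
variable {R : Type*} [CommRing R] (a : Rˣ) (x : ℕ → R)

/-- weight of a multiset -/
noncomputable def wt (s : Multiset ℕ) : R :=
  ((a ^ ((s.toFinset.card : ℤ) - 1) : Rˣ) : R) * (s.map x).prod

lemma htilde_eq (m n : ℕ) : htilde a x m n = ∑ μ ∈ (Finset.range n).sym m, wt a x μ.1 := rfl

lemma sym_filter_not (n k : ℕ) :
    ((Finset.range (n+1)).sym k).filter (fun μ => ¬ n ∈ μ) = (Finset.range n).sym k := by
  ext μ
  simp only [Finset.mem_filter, Finset.mem_sym_iff, Finset.mem_range, Nat.lt_succ_iff]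
  constructor
  · rintro ⟨h1, h2⟩ i hi
    have := h1 i hi
    rcases lt_or_eq_of_le this with h | h
    · exact h
    · exact absurd (h ▸ hi) h2
  · intro h
    exact ⟨fun i hi => (h i hi).le, fun hn => lt_irrefl n (h n hn)⟩

lemma sym_split (n k : ℕ) (f : Sym ℕ k → R) :
    ∑ μ ∈ (Finset.range (n+1)).sym k, f μ
      = (∑ μ ∈ (Finset.range n).sym k, f μ)
        + ∑ μ ∈ ((Finset.range (n+1)).sym k).filter (fun μ => n ∈ μ), f μ := by
  rw [← Finset.sum_filter_add_sum_filter_not ((Finset.range (n+1)).sym k) (fun μ => n ∈ μ) f,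
    sym_filter_not, add_comm]

lemma filter_cons (n k : ℕ) :
    ((Finset.range (n+1)).sym (k+1)).filter (fun μ => n ∈ μ)
      = ((Finset.range (n+1)).sym k).image (Sym.cons n) := by
  ext μ
  simp only [Finset.mem_filter, Finset.mem_image, Finset.mem_sym_iff]
  constructor
  · rintro ⟨h1, h2⟩
    refine ⟨μ.erase n h2, fun i hi => h1 i ?_, Sym.cons_erase h2⟩
    have : i ∈ n ::ₛ μ.erase n h2 := Sym.mem_cons.2 (Or.inr hi)
    rwa [Sym.cons_erase] at this
  · rintro ⟨μ', h1, rfl⟩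
    refine ⟨fun i hi => ?_, Sym.mem_cons_self n μ'⟩
    rcases Sym.mem_cons.1 hi with h | h
    · rw [Finset.mem_range, h]; omega
    · exact h1 i h

lemma sum_contains (n k : ℕ) (f : Sym ℕ (k+1) → R) :
    ∑ μ ∈ ((Finset.range (n+1)).sym (k+1)).filter (fun μ => n ∈ μ), f μ
      = ∑ μ ∈ (Finset.range (n+1)).sym k, f (n ::ₛ μ) := by
  rw [filter_cons]
  exact Finset.sum_image (fun s _ t _ h => (Sym.cons_inj_right n s t).1 h)

lemma wt_cons_mem (s : Multiset ℕ) (n : ℕ) (h : n ∈ s) :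
    wt a x (n ::ₘ s) = wt a x s * x n := by
  unfold wt
  rw [Multiset.toFinset_cons, Finset.insert_eq_self.2 (Multiset.mem_toFinset.2 h),
    Multiset.map_cons, Multiset.prod_cons]
  ring

lemma wt_cons_not_mem (s : Multiset ℕ) (n : ℕ) (h : ¬ n ∈ s) :
    wt a x (n ::ₘ s) = (a : R) * wt a x s * x n := by
  unfold wt
  rw [Multiset.toFinset_cons, Finset.card_insert_of_notMem (by simpa using h),
    Multiset.map_cons, Multiset.prod_cons]
  have : ((a ^ (((s.toFinset.card + 1 : ℕ) : ℤ) - 1) : Rˣ) : R)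
      = (a : R) * ((a ^ ((s.toFinset.card : ℤ) - 1) : Rˣ) : R) := by
    push_cast
    rw [show ((s.toFinset.card : ℤ) + 1 - 1) = 1 + ((s.toFinset.card : ℤ) - 1) by ring,
      zpow_add, zpow_one, Units.val_mul]
  rw [this]; ring

end aux

/-- Let `R` be a commutative ring, `a ∈ R` a unit, and `h̃_m` the modified
complete symmetric polynomial as above. Then for all `n ≥ 1` and `m ≥ 1`:
`h̃_m(x₁,…,x_n) = h̃_m(x₁,…,x_{n−1}) + h̃_{m−1}(x₁,…,x_n)·x_n − (1−a)·h̃_{m−1}(x₁,…,x_{n−1})·x_n`. -/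
theorem stmt_10 (R : Type*) [CommRing R] (a : Rˣ) (x : ℕ → R) (m n : ℕ)
    (hn : 1 ≤ n) (hm : 1 ≤ m) :
    htilde a x m n =
      htilde a x m (n - 1) + htilde a x (m - 1) n * x (n - 1)
        - (1 - (a : R)) * htilde a x (m - 1) (n - 1) * x (n - 1) := by

  obtain ⟨n, rfl⟩ : ∃ n', n = n' + 1 := ⟨n - 1, by omega⟩
  obtain ⟨m, rfl⟩ : ∃ m', m = m' + 1 := ⟨m - 1, by omega⟩
  simp only [Nat.add_sub_cancel]
  simp only [htilde_eq]
  -- abbreviations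
  set A : R := ∑ μ ∈ ((Finset.range (n+1)).sym m).filter (fun μ => n ∈ μ), wt a x μ.1 with hA
  set B : R := ∑ μ ∈ (Finset.range n).sym m, wt a x μ.1 with hB
  have hsplit : ∑ μ ∈ (Finset.range (n+1)).sym m, wt a x μ.1 = B + A :=
    sym_split n m _
  rw [hsplit]
  rw [sym_split n (m+1) (fun μ => wt a x μ.1), sum_contains n m (fun μ => wt a x μ.1)]
  have key : ∑ μ ∈ (Finset.range (n+1)).sym m, wt a x ((n ::ₛ μ) : Sym ℕ (m+1)).1
      = (a : R) * B * x n + A * x n := by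
    rw [sym_split n m (fun μ => wt a x ((n ::ₛ μ) : Sym ℕ (m+1)).1)]
    congr 1
    · rw [hB, Finset.mul_sum, Finset.sum_mul]
      refine Finset.sum_congr rfl fun μ hμ => ?_
      have hnot : ¬ n ∈ μ.1 := by
        intro h
        have := (Finset.mem_sym_iff.1 hμ) n h
        simp at this
      rw [show (n ::ₛ μ).1 = n ::ₘ μ.1 from rfl, wt_cons_not_mem a x μ.1 n hnot]
    · rw [hA, Finset.sum_mul]
      refine Finset.sum_congr rfl fun μ hμ => ?_
      have hmem : n ∈ μ.1 := (Finset.mem_filter.1 hμ).2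
      rw [show (n ::ₛ μ).1 = n ::ₘ μ.1 from rfl, wt_cons_mem a x μ.1 n hmem]
  rw [key]; ring
end

section
/- Let R be a commutative ring, a ∈ R a unit, and h̃_m(x₁,…,x_n) = ∑_{1≤i₁≤…≤i_m≤n} a^{|{i₁,…,i_m}|−1} x_{i₁}⋯x_{i_m} (with h̃₀ = a⁻¹). Then in the formal power series ring R[x₁,…,x_n]⟦t⟧ one has the generating function identity: ∑_{m≥0} h̃_m(x₁,…,x_n)·tᵐ = a⁻¹·∏_{i=1}^{n} (1 − (1−a)·x_i·t)·(1 − x_i·t)⁻¹. -/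
lemma factor_eq {R : Type*} [CommRing R] (a : Rˣ) (c : R) :
    (1 - PowerSeries.C (R := R) ((1 - (a : R)) * c) * PowerSeries.X) *
      PowerSeries.invOfUnit (1 - PowerSeries.C (R := R) c * PowerSeries.X) 1 =
    PowerSeries.mk (fun m => if m = 0 then 1 else (a : R) * c ^ m) := by
  have hu : PowerSeries.constantCoeff (R := R) (1 - PowerSeries.C (R := R) c * PowerSeries.X) = ((1 : Rˣ) : R) := by
    simp
  have hinv := PowerSeries.mul_invOfUnit (1 - PowerSeries.C (R := R) c * PowerSeries.X) 1 hu
  have key : PowerSeries.mk (fun m => if m = 0 then 1 else (a : R) * c ^ m) *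
      (1 - PowerSeries.C (R := R) c * PowerSeries.X) =
      1 - PowerSeries.C (R := R) ((1 - (a : R)) * c) * PowerSeries.X := by
    have h2 : PowerSeries.mk (fun m => if m = 0 then 1 else (a : R) * c ^ m) *
        (1 - PowerSeries.C (R := R) c * PowerSeries.X) =
        PowerSeries.mk (fun m => if m = 0 then 1 else (a : R) * c ^ m) -
          PowerSeries.C (R := R) c * (PowerSeries.mk (fun m => if m = 0 then 1 else (a : R) * c ^ m)
            * PowerSeries.X) := by ring
    rw [h2]
    ext m
    rcases m with _ | m
    · simp
    · rcases m with _ | m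
      · simp [PowerSeries.coeff_succ_mul_X, PowerSeries.coeff_C_mul, PowerSeries.coeff_X,
          PowerSeries.coeff_one]
        ring
      · simp [PowerSeries.coeff_succ_mul_X, PowerSeries.coeff_C_mul, PowerSeries.coeff_X,
          PowerSeries.coeff_one, pow_succ]
        ring
  calc (1 - PowerSeries.C (R := R) ((1 - (a : R)) * c) * PowerSeries.X) *
      PowerSeries.invOfUnit (1 - PowerSeries.C (R := R) c * PowerSeries.X) 1
      = (PowerSeries.mk (fun m => if m = 0 then 1 else (a : R) * c ^ m) *
        (1 - PowerSeries.C (R := R) c * PowerSeries.X)) *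
        PowerSeries.invOfUnit (1 - PowerSeries.C (R := R) c * PowerSeries.X) 1 := by rw [key]
    _ = PowerSeries.mk (fun m => if m = 0 then 1 else (a : R) * c ^ m) *
        ((1 - PowerSeries.C (R := R) c * PowerSeries.X) *
          PowerSeries.invOfUnit (1 - PowerSeries.C (R := R) c * PowerSeries.X) 1) := by ring
    _ = _ := by rw [hinv, mul_one]

lemma key_term {R : Type*} [CommRing R] (a : Rˣ) (x : ℕ → R) (n : ℕ) (s : Multiset ℕ)
    (hs : ∀ i ∈ s, i ∈ Finset.range n) :
    ∏ i ∈ Finset.range n, (if s.count i = 0 then 1 else (a : R) * x i ^ s.count i)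
    = (a : R) ^ s.toFinset.card * (s.map x).prod := by
  have hsub : s.toFinset ⊆ Finset.range n := fun i hi => hs i (Multiset.mem_toFinset.1 hi)
  calc ∏ i ∈ Finset.range n, (if s.count i = 0 then 1 else (a : R) * x i ^ s.count i)
      = ∏ i ∈ s.toFinset, (if s.count i = 0 then 1 else (a : R) * x i ^ s.count i) := by
        refine (Finset.prod_subset hsub (fun i _ hi => ?_)).symm
        have : s.count i = 0 := Multiset.count_eq_zero.2 (fun h => hi (Multiset.mem_toFinset.2 h))
        simp [this]
    _ = ∏ i ∈ s.toFinset, ((a : R) * x i ^ s.count i) := by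
        refine Finset.prod_congr rfl (fun i hi => ?_)
        have : s.count i ≠ 0 := by
          simpa [Multiset.count_eq_zero] using Multiset.mem_toFinset.1 hi
        simp [this]
    _ = (∏ _i ∈ s.toFinset, (a : R)) * ∏ i ∈ s.toFinset, x i ^ s.count i :=
        Finset.prod_mul_distrib
    _ = (a : R) ^ s.toFinset.card * (s.map x).prod := by
        rw [Finset.prod_const, ← Finset.prod_multiset_map_count]

lemma htilde_eq_s11 {R : Type*} [CommRing R] (a : Rˣ) (x : ℕ → R) (m n : ℕ) :
    htilde a x m n = ((a⁻¹ : Rˣ) : R) *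
      ∑ l ∈ Finset.finsuppAntidiag (Finset.range n) m,
        ∏ i ∈ Finset.range n, (if l i = 0 then 1 else (a : R) * x i ^ (l i)) := by
  rw [htilde, Finset.mul_sum]
  refine Finset.sum_bij' (fun μ _ => μ.1.toFinsupp)
    (fun f hf => Sym.mk f.toMultiset (by
      rw [Finsupp.card_toMultiset]
      exact (Finset.mem_finsuppAntidiag'.1 hf).1))
    ?_ ?_ ?_ ?_ ?_
  · intro μ hμ
    rw [Finset.mem_finsuppAntidiag']
    constructor
    · have h := Finsupp.card_toMultiset (Multiset.toFinsupp μ.1)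
      rw [Multiset.toFinsupp_toMultiset] at h
      exact h.symm.trans μ.2
    · rw [Multiset.toFinsupp_support]
      intro i hi
      exact Finset.mem_sym_iff.1 hμ i (Multiset.mem_toFinset.1 hi)
  · intro f hf
    rw [Finset.mem_sym_iff]
    intro i hi
    have : i ∈ f.toMultiset := hi
    rw [Finsupp.mem_toMultiset] at this
    exact (Finset.mem_finsuppAntidiag.1 hf).2 this
  · intro μ hμ
    exact Sym.ext (by simp [Multiset.toFinsupp_toMultiset])
  · intro f hf
    exact Finsupp.toMultiset_toFinsupp f
  · intro μ hμ
    have hmem : ∀ i ∈ μ.1, i ∈ Finset.range n := Finset.mem_sym_iff.1 hμ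
    have := key_term a x n μ.1 hmem
    simp only [Multiset.toFinsupp_apply]
    erw [this]
    have : ((a ^ ((μ.1.toFinset.card : ℤ) - 1) : Rˣ) : R)
        = ((a⁻¹ : Rˣ) : R) * (a : R) ^ μ.1.toFinset.card := by
      rw [zpow_sub, zpow_one, zpow_natCast, Units.val_mul, mul_comm,
        Units.val_pow_eq_pow_val]
    rw [this, mul_assoc]

/-- the generating function identity
`∑_{m≥0} h̃_m(x₁,…,x_n)·tᵐ = a⁻¹·∏_{i=1}^{n} (1 − (1−a)·x_i·t)·(1 − x_i·t)⁻¹`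
in the formal power series ring `R⟦t⟧`. The inverse `(1 − x_i·t)⁻¹` is
`PowerSeries.invOfUnit (1 - C (x i) * X) 1`, the inverse of the power series `1 − x_i·t`,
whose constant coefficient is the unit `1`. -/
theorem stmt_11 (R : Type*) [CommRing R] (a : Rˣ) (x : ℕ → R) (n : ℕ) :
    PowerSeries.mk (fun m => htilde a x m n) =
      PowerSeries.C (R := R) ((a⁻¹ : Rˣ) : R) *
        ∏ i ∈ Finset.range n,
          (1 - PowerSeries.C (R := R) ((1 - (a : R)) * x i) * PowerSeries.X) *
            PowerSeries.invOfUnit (1 - PowerSeries.C (R := R) (x i) * PowerSeries.X) 1 := by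
  ext m
  rw [PowerSeries.coeff_mk, htilde_eq_s11]
  simp only [factor_eq]
  rw [PowerSeries.coeff_C_mul, PowerSeries.coeff_prod]
  simp only [PowerSeries.coeff_mk]
end

section
/- Let R be a commutative ring, a ∈ R, and m ≥ 1, n ≥ 0. Then ∑_{1≤i₁≤…≤i_m≤n} a^{|{i₁,…,i_m}|−1} x_{i₁}⋯x_{i_m} = ∑_{λ} a^{ℓ(λ)−1} m_λ(x₁,…,x_n), where the right-hand sum is over all partitions λ of m with at most n parts, ℓ(λ) is the number of (nonzero) parts of λ, and m_λ is the monomial symmetric polynomial associated to λ. -/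
/-- Let `R` be a commutative ring, `a ∈ R`, and `m ≥ 1`, `n ≥ 0`. Then
`∑_{1≤i₁≤…≤i_m≤n} a^{|{i₁,…,i_m}|−1} x_{i₁}⋯x_{i_m} = ∑_{λ} a^{ℓ(λ)−1} m_λ(x₁,…,x_n)`,
where the right-hand sum is over all partitions `λ` of `m` with at most `n` parts, `ℓ(λ)` is
the number of (nonzero) parts of `λ`, and `m_λ` is the monomial symmetric polynomial
associated to `λ`. Here we work in the polynomial ring `MvPolynomial (Fin n) R` with the `n`
variables `X 0, …, X (n-1)`; a weakly increasing sequence `i₁ ≤ … ≤ i_m` corresponds to a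
multiset `μ : Sym (Fin n) m`, with `|{i₁,…,i_m}|` the number of distinct entries. -/
theorem stmt_12 (R : Type*) [CommRing R] (a : R) (m n : ℕ) (hm : 1 ≤ m) :
    ∑ μ : Sym (Fin n) m,
        MvPolynomial.C (a ^ (μ.1.toFinset.card - 1)) * (μ.1.map MvPolynomial.X).prod
      = ∑ lam ∈ Finset.univ.filter (fun lam : Nat.Partition m => lam.parts.card ≤ n),
          MvPolynomial.C (a ^ (lam.parts.card - 1)) * MvPolynomial.msymm (Fin n) R lam := by
  classical
  have key : ∀ μ : Sym (Fin n) m, (Nat.Partition.ofSym μ).parts.card = μ.1.toFinset.card := by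
    intro μ
    simp [Nat.Partition.ofSym, Multiset.toFinset]
  rw [← Finset.sum_fiberwise_of_maps_to
    (g := fun μ : Sym (Fin n) m => Nat.Partition.ofSym μ)
    (t := Finset.univ.filter (fun lam : Nat.Partition m => lam.parts.card ≤ n))
    (fun μ _ => by
      simp only [Finset.mem_filter, Finset.mem_univ, true_and, key]
      exact (Finset.card_le_univ _).trans (by simp))]
  refine Finset.sum_congr rfl fun lam hlam => ?_
  have hcoef : ∀ μ ∈ Finset.univ.filter (fun μ : Sym (Fin n) m => Nat.Partition.ofSym μ = lam),
      MvPolynomial.C (a ^ (μ.1.toFinset.card - 1)) * (μ.1.map MvPolynomial.X).prod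
        = MvPolynomial.C (a ^ (lam.parts.card - 1)) * (μ.1.map MvPolynomial.X).prod := by
    intro μ hμ
    simp only [Finset.mem_filter, Finset.mem_univ, true_and] at hμ
    rw [← hμ, key]
  rw [Finset.sum_congr rfl hcoef,
    Finset.sum_subtype (p := fun μ : Sym (Fin n) m => Nat.Partition.ofSym μ = lam) _ (fun μ => by simp)
      (fun μ : Sym (Fin n) m =>
        MvPolynomial.C (a ^ (lam.parts.card - 1)) * (μ.1.map MvPolynomial.X).prod),
    MvPolynomial.msymm, Finset.mul_sum]
end

section
/- Let K be a field, q ∈ K×, z = q − q⁻¹, V = Kⁿ with basis v₁,…,v_n, and let T ∈ End(V⊗V) be defined by T(v_i⊗v_j) = v_j⊗v_i if i < j, T(v_i⊗v_i) = q·v_i⊗v_i, and T(v_i⊗v_j) = v_j⊗v_i + z·v_i⊗v_j if i > j. Then the braid relation holds on V⊗V⊗V: (T⊗id_V)∘(id_V⊗T)∘(T⊗id_V) = (id_V⊗T)∘(T⊗id_V)∘(id_V⊗T). -/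
open TensorProduct

set_option maxHeartbeats 1000000 in
set_option synthInstance.maxHeartbeats 1000000 in
/-- Let `K` be a field, `q ∈ K×`, `z = q − q⁻¹`, `V = Kⁿ` with basis
`v₁,…,v_n`, and let `T ∈ End(V⊗V)` be the R-matrix operator defined by
`T(v_i⊗v_j) = v_j⊗v_i` if `i < j`, `T(v_i⊗v_i) = q·v_i⊗v_i`, and
`T(v_i⊗v_j) = v_j⊗v_i + z·v_i⊗v_j` if `i > j`. Then the braid relation holds on `V⊗V⊗V`:
`(T⊗id_V)∘(id_V⊗T)∘(T⊗id_V) = (id_V⊗T)∘(T⊗id_V)∘(id_V⊗T)`.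
Here we work on `(V⊗V)⊗V`; the operator `id_V⊗T` is transported along the associator. -/
theorem stmt_14 (K : Type*) [Field K] (q : K) (hq : q ≠ 0) (n : ℕ)
    (T : TensorProduct K (Fin n → K) (Fin n → K) →ₗ[K]
          TensorProduct K (Fin n → K) (Fin n → K))
    (v : Fin n → (Fin n → K)) (hv : ∀ i, v i = Pi.single i 1)
    (hlt : ∀ i j : Fin n, i < j → T (v i ⊗ₜ[K] v j) = v j ⊗ₜ[K] v i)
    (heq : ∀ i : Fin n, T (v i ⊗ₜ[K] v i) = q • (v i ⊗ₜ[K] v i))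
    (hgt : ∀ i j : Fin n, j < i →
      T (v i ⊗ₜ[K] v j) = v j ⊗ₜ[K] v i + (q - q⁻¹) • (v i ⊗ₜ[K] v j)) :
    (LinearMap.rTensor (Fin n → K) T) ∘ₗ
        ((TensorProduct.assoc K (Fin n → K) (Fin n → K) (Fin n → K)).symm.toLinearMap ∘ₗ
          LinearMap.lTensor (Fin n → K) T ∘ₗ
          (TensorProduct.assoc K (Fin n → K) (Fin n → K) (Fin n → K)).toLinearMap) ∘ₗ
        (LinearMap.rTensor (Fin n → K) T)
      = ((TensorProduct.assoc K (Fin n → K) (Fin n → K) (Fin n → K)).symm.toLinearMap ∘ₗ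
          LinearMap.lTensor (Fin n → K) T ∘ₗ
          (TensorProduct.assoc K (Fin n → K) (Fin n → K) (Fin n → K)).toLinearMap) ∘ₗ
        (LinearMap.rTensor (Fin n → K) T) ∘ₗ
        ((TensorProduct.assoc K (Fin n → K) (Fin n → K) (Fin n → K)).symm.toLinearMap ∘ₗ
          LinearMap.lTensor (Fin n → K) T ∘ₗ
          (TensorProduct.assoc K (Fin n → K) (Fin n → K) (Fin n → K)).toLinearMap) := by
  have hB : ∀ i : Fin n, (Pi.basisFun K (Fin n)) i = v i := by
    intro i; rw [hv]; simp [Pi.basisFun_apply]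
  apply Module.Basis.ext (((Pi.basisFun K (Fin n)).tensorProduct
    (Pi.basisFun K (Fin n))).tensorProduct (Pi.basisFun K (Fin n)))
  rintro ⟨⟨i, j⟩, k⟩
  simp only [Module.Basis.tensorProduct_apply, hB]
  rcases lt_trichotomy i j with hij | hij | hij <;>
    rcases lt_trichotomy j k with hjk | hjk | hjk <;>
    rcases lt_trichotomy i k with hik | hik | hik <;>
    first
      | omega
      | (simp (disch := omega) only [hij, hjk, hik, LinearMap.comp_apply,
          LinearEquiv.coe_coe, LinearMap.rTensor_tmul, LinearMap.lTensor_tmul,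
          TensorProduct.assoc_tmul, TensorProduct.assoc_symm_tmul,
          map_add, map_smul, tmul_add, add_tmul, tmul_smul, ← smul_tmul',
          smul_add, smul_smul, hlt, heq, hgt]
         try match_scalars <;> (try field_simp; try ring))
end
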